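/- For every complex number z = x + i·y with x > 0 and y ≠ 0, the sequence c_N(z) = (∑_{n=1}^{N} n^{-z}) + (N+1)^{-z}/(1−z) · (1 − x − y/tan(y·ln((N+2)/(N+1)))) converges, as N → ∞, to ζ(z), the value at z of the analytically continued Riemann zeta function. -/

import Mathlib

open Filter

/-- The `N`-th partial sum of the Riemann series: `ζ_N(z) = ∑_{n=1}^{N} n^{-z}`. -/
noncomputable def zetaPartial (z : ℂ) (N : ℕ) : ℂ :=
  ∑ n ∈ Finset.Icc 1 N, (n : ℂ) ^ (-z)

/-- The correction term
`r_N(z) = (N+1)^{-z}/(1−z) · (1 − x − y/tan(y·ln((N+2)/(N+1))))` where `x = Re z`, `y = Im z`. -/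
noncomputable def radialCorrection (z : ℂ) (N : ℕ) : ℂ :=
  ((N : ℂ) + 1) ^ (-z) / (1 - z) *
    ((1 - z.re - z.im / Real.tan (z.im * Real.log (((N : ℝ) + 2) / ((N : ℝ) + 1))) : ℝ) : ℂ)

/-- The radial-convergence sequence `c_N(z) = ζ_N(z) + r_N(z)`. -/
noncomputable def radialSeq (z : ℂ) (N : ℕ) : ℂ :=
  zetaPartial z N + radialCorrection z N

open Complex Set Topology intervalIntegral

namespace RadialAux

/-- Auxiliary term. -/
noncomputable def aterm (w : ℂ) (n : ℕ) : ℂ :=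
  (n : ℂ) ^ (-w) - (((n : ℂ) + 1) ^ (1 - w) - (n : ℂ) ^ (1 - w)) / (1 - w)

lemma aterm_eq_integral {w : ℂ} (hw0 : w ≠ 0) (hw : w ≠ 1) {n : ℕ} (hn : 1 ≤ n) :
    aterm w n = ∫ t : ℝ in (n : ℝ)..((n : ℝ) + 1), ((n : ℂ) ^ (-w) - (t : ℂ) ^ (-w)) := by
  have hn0 : (0 : ℝ) < n := by exact_mod_cast hn
  have h0 : (0 : ℝ) ∉ Set.uIcc (n : ℝ) ((n : ℝ) + 1) := by
    rw [Set.uIcc_of_le (by linarith)]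
    rintro ⟨h1, -⟩; linarith
  have hint : IntervalIntegrable (fun t : ℝ => (t : ℂ) ^ (-w)) MeasureTheory.volume
      (n : ℝ) ((n : ℝ) + 1) := intervalIntegrable_cpow (Or.inr h0)
  rw [intervalIntegral.integral_sub intervalIntegrable_const hint,
    intervalIntegral.integral_const, integral_cpow (Or.inr ⟨by simpa using hw, h0⟩)]
  have : -w + 1 = 1 - w := by ring
  rw [this]
  push_cast
  simp only [aterm, Complex.real_smul, sub_div]
  push_cast
  ring

lemma aterm_norm_le {w : ℂ} (hw0 : 0 < w.re) (hw : w ≠ 1) {n : ℕ} (hn : 1 ≤ n) :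
    ‖aterm w n‖ ≤ ‖w‖ * (n : ℝ) ^ (-w.re - 1) := by
  have hw0' : w ≠ 0 := by intro h; rw [h] at hw0; simp at hw0
  have hn0 : (0 : ℝ) < n := by exact_mod_cast hn
  rw [aterm_eq_integral hw0' hw hn]
  have key : ∀ t ∈ Set.uIoc (n : ℝ) ((n : ℝ) + 1),
      ‖(n : ℂ) ^ (-w) - (t : ℂ) ^ (-w)‖ ≤ ‖w‖ * (n : ℝ) ^ (-w.re - 1) := by
    intro t ht
    rw [Set.uIoc_of_le (by linarith)] at ht
    -- mean value on [n, n+1]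
    have hderiv : ∀ x ∈ Set.Icc (n : ℝ) ((n : ℝ) + 1),
        HasDerivWithinAt (fun y : ℝ => (y : ℂ) ^ (-w)) (-w * (x : ℂ) ^ (-w - 1))
          (Set.Icc (n : ℝ) ((n : ℝ) + 1)) x := by
      intro x hx
      have hx0 : (0 : ℝ) < x := lt_of_lt_of_le hn0 hx.1
      have : HasDerivAt (fun y : ℝ => (y : ℂ) ^ (-w)) (-w * (x : ℂ) ^ (-w - 1)) x :=
        (Complex.hasStrictDerivAt_cpow_const
          (Complex.ofReal_mem_slitPlane.2 hx0)).hasDerivAt.comp_ofReal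
      exact this.hasDerivWithinAt
    have hbound : ∀ x ∈ Set.Ico (n : ℝ) ((n : ℝ) + 1),
        ‖-w * (x : ℂ) ^ (-w - 1)‖ ≤ ‖w‖ * (n : ℝ) ^ (-w.re - 1) := by
      intro x hx
      have hx0 : (0 : ℝ) < x := lt_of_lt_of_le hn0 hx.1
      rw [norm_mul, norm_neg,
        Complex.norm_cpow_eq_rpow_re_of_pos hx0]
      have he : (-w - 1).re = -w.re - 1 := by simp
      rw [he]
      refine mul_le_mul_of_nonneg_left ?_ (norm_nonneg w)
      exact Real.rpow_le_rpow_of_nonpos hn0 hx.1 (by linarith)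
    have := fun x hx => norm_image_sub_le_of_norm_deriv_le_segment' hderiv hbound x hx
    have ht' : t ∈ Set.Icc (n : ℝ) ((n : ℝ) + 1) := ⟨le_of_lt ht.1, ht.2⟩
    have h2 := this t ht'
    rw [norm_sub_rev]
    calc ‖(t : ℂ) ^ (-w) - (n : ℂ) ^ (-w)‖ ≤ ‖w‖ * (n : ℝ) ^ (-w.re - 1) * (t - n) := h2
      _ ≤ ‖w‖ * (n : ℝ) ^ (-w.re - 1) * 1 := by
          refine mul_le_mul_of_nonneg_left (by linarith [ht.2]) ?_
          positivity
      _ = ‖w‖ * (n : ℝ) ^ (-w.re - 1) := mul_one _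
  calc ‖∫ t : ℝ in (n : ℝ)..((n : ℝ) + 1), ((n : ℂ) ^ (-w) - (t : ℂ) ^ (-w))‖
      ≤ ‖w‖ * (n : ℝ) ^ (-w.re - 1) * |((n : ℝ) + 1) - n| := by
        apply intervalIntegral.norm_integral_le_of_norm_le_const
        exact key
    _ = ‖w‖ * (n : ℝ) ^ (-w.re - 1) := by simp

lemma summable_bound {x : ℝ} (hx : 0 < x) (C : ℝ) :
    Summable (fun n : ℕ => C * ((n : ℝ) + 1) ^ (-x - 1)) := by
  apply Summable.mul_left
  have h1 : Summable (fun n : ℕ => (n : ℝ) ^ (-x - 1)) :=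
    Real.summable_nat_rpow.2 (by linarith)
  have h2 := (summable_nat_add_iff 1).2 h1
  refine h2.congr fun n => ?_
  push_cast
  ring_nf

lemma sum_aterm_eq {w : ℂ} (hw : w ≠ 1) (N : ℕ) :
    ∑ n ∈ Finset.range N, aterm w (n + 1)
      = zetaPartial w N - (((N : ℂ) + 1) ^ (1 - w) - 1) / (1 - w) := by
  have h1w : (1 : ℂ) - w ≠ 0 := by
    intro h; apply hw; linear_combination -h
  induction N with
  | zero => simp [zetaPartial, Complex.one_cpow]
  | succ N ih =>
      have hzp : zetaPartial w (N + 1) = zetaPartial w N + ((N : ℂ) + 1) ^ (-w) := by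
        rw [zetaPartial, zetaPartial, Finset.sum_Icc_succ_top (by omega : 1 ≤ N + 1)]
        push_cast
        ring_nf
      rw [Finset.sum_range_succ, ih, hzp]
      simp only [aterm]
      push_cast
      field_simp
      ring
/-- bound specialized to shifted index -/
lemma aterm_norm_le' {w : ℂ} (hw0 : 0 < w.re) (hw : w ≠ 1) (n : ℕ) :
    ‖aterm w (n + 1)‖ ≤ ‖w‖ * ((n : ℝ) + 1) ^ (-w.re - 1) := by
  have := aterm_norm_le hw0 hw (n := n + 1) (by omega)
  simpa using this

lemma summable_aterm {w : ℂ} (hw0 : 0 < w.re) (hw : w ≠ 1) :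
    Summable (fun n : ℕ => aterm w (n + 1)) := by
  apply Summable.of_norm_bounded (summable_bound hw0 ‖w‖)
  exact fun n => aterm_norm_le' hw0 hw n

noncomputable def glim (w : ℂ) : ℂ := (∑' n : ℕ, aterm w (n + 1)) + 1 / (w - 1)

lemma tendsto_sN_glim {w : ℂ} (hw0 : 0 < w.re) (hw : w ≠ 1) :
    Tendsto (fun N : ℕ => zetaPartial w N + ((N : ℂ) + 1) ^ (1 - w) / (w - 1)) atTop
      (nhds (glim w)) := by
  have h1w : (1 : ℂ) - w ≠ 0 := by intro h; apply hw; linear_combination -h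
  have hw1 : w - 1 ≠ 0 := by intro h; apply hw; linear_combination h
  have key : ∀ N : ℕ, zetaPartial w N + ((N : ℂ) + 1) ^ (1 - w) / (w - 1)
      = (∑ n ∈ Finset.range N, aterm w (n + 1)) + 1 / (w - 1) := by
    intro N
    rw [sum_aterm_eq hw]
    field_simp
    ring
  simp only [key]
  exact ((summable_aterm hw0 hw).hasSum.tendsto_sum_nat).add tendsto_const_nhds

lemma tendsto_cpow_zero {c : ℂ} (hc : c.re < 0) :
    Tendsto (fun N : ℕ => ((N : ℂ) + 1) ^ c) atTop (nhds 0) := by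
  rw [tendsto_zero_iff_norm_tendsto_zero]
  have hnorm : ∀ N : ℕ, ‖((N : ℂ) + 1) ^ c‖ = ((N : ℝ) + 1) ^ c.re := by
    intro N
    have : ((N : ℂ) + 1) = (((N : ℝ) + 1 : ℝ) : ℂ) := by push_cast; ring
    rw [this, Complex.norm_cpow_eq_rpow_re_of_pos (by positivity)]
  simp only [hnorm]
  have h1 : Tendsto (fun N : ℕ => (N : ℝ) + 1) atTop atTop :=
    tendsto_atTop_add_const_right _ 1 tendsto_natCast_atTop_atTop
  have h2 : Tendsto (fun x : ℝ => x ^ c.re) atTop (nhds 0) := by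
    have := tendsto_rpow_neg_atTop (y := -c.re) (by linarith)
    simpa using this
  exact h2.comp h1

lemma tendsto_sN_zeta {w : ℂ} (hw : 1 < w.re) :
    Tendsto (fun N : ℕ => zetaPartial w N + ((N : ℂ) + 1) ^ (1 - w) / (w - 1)) atTop
      (nhds (riemannZeta w)) := by
  have hsum : Summable (fun n : ℕ => (n : ℂ) ^ (-w)) := by
    refine (Complex.summable_one_div_nat_cpow.2 hw).congr fun n => ?_
    rw [Complex.cpow_neg, one_div]
  have hzeta : riemannZeta w = ∑' n : ℕ, (n : ℂ) ^ (-w) := by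
    rw [zeta_eq_tsum_one_div_nat_cpow hw]
    exact tsum_congr fun n => by rw [Complex.cpow_neg, one_div]
  have hzp : ∀ N : ℕ, zetaPartial w N = ∑ n ∈ Finset.range (N + 1), (n : ℂ) ^ (-w) := by
    intro N
    have h0 : ((0 : ℕ) : ℂ) ^ (-w) = 0 := by
      rw [Nat.cast_zero, Complex.zero_cpow]
      intro h
      have : w = 0 := by linear_combination -h
      rw [this] at hw; simp only [Complex.zero_re] at hw; linarith
    rw [Finset.sum_range_succ', h0, add_zero, zetaPartial, ← Finset.Ico_add_one_right_eq_Icc,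
      Finset.sum_Ico_eq_sum_range]
    simp only [add_tsub_cancel_right]
    exact Finset.sum_congr rfl fun n _ => by rw [add_comm]
  have h1 : Tendsto (fun N : ℕ => zetaPartial w N) atTop (nhds (riemannZeta w)) := by
    rw [hzeta]
    simp only [hzp]
    exact hsum.hasSum.tendsto_sum_nat.comp (tendsto_add_atTop_nat 1)
  have h2 : Tendsto (fun N : ℕ => ((N : ℂ) + 1) ^ (1 - w) / (w - 1)) atTop (nhds 0) := by
    have := (tendsto_cpow_zero (c := 1 - w) (by simp; linarith)).div_const (w - 1)
    simpa using this
  simpa using h1.add h2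

lemma aterm_diffAt {w : ℂ} (hw : w ≠ 1) (n : ℕ) :
    DifferentiableAt ℂ (fun v => aterm v (n + 1)) w := by
  have h1w : (1 : ℂ) - w ≠ 0 := by intro h; apply hw; linear_combination -h
  have hb : ((n + 1 : ℕ) : ℂ) ≠ 0 := Nat.cast_ne_zero.2 (Nat.succ_ne_zero n)
  have hb2 : ((n + 1 : ℕ) : ℂ) + 1 ≠ 0 := by
    intro h
    have := congrArg Complex.re h
    push_cast at this
    simp at this
    linarith [Nat.cast_nonneg (α := ℝ) n]
  unfold aterm
  apply DifferentiableAt.sub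
  · exact differentiableAt_id.neg.const_cpow (Or.inl hb)
  · apply DifferentiableAt.div _ _ h1w
    · apply DifferentiableAt.sub
      · exact ((differentiableAt_const 1).sub differentiableAt_id).const_cpow (Or.inl hb2)
      · exact ((differentiableAt_const 1).sub differentiableAt_id).const_cpow (Or.inl hb)
    · exact (differentiableAt_const 1).sub differentiableAt_id

/-- part A -/
lemma glim_eq_zeta (z : ℂ) (hx : 0 < z.re) (hy : z.im ≠ 0) : glim z = riemannZeta z := by
  set y := z.im with hy'
  set U : Set ℂ := {w | 0 < w.re ∧ 0 < y * w.im} with hU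
  have hUopen : IsOpen U := by
    apply IsOpen.inter
    · exact isOpen_lt continuous_const Complex.continuous_re
    · exact isOpen_lt continuous_const (continuous_const.mul Complex.continuous_im)
  have hUne1 : ∀ w ∈ U, w ≠ 1 := by
    rintro w ⟨-, h2⟩ rfl
    simp at h2
  have hUconv : Convex ℝ U := by
    apply Convex.inter
    · exact convex_halfSpace_re_gt 0
    · have hlin : IsLinearMap ℝ (fun w : ℂ => y * w.im) :=
        ⟨fun a b => by simp [Complex.add_im, mul_add],
         fun c a => by simp [Complex.smul_im]; ring⟩
      exact convex_halfSpace_gt hlin 0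
  -- locally uniform convergence of the partial sums of aterm on U
  have hTLU : TendstoLocallyUniformlyOn
      (fun (N : ℕ) (w : ℂ) => ∑ n ∈ Finset.range N, aterm w (n + 1))
      (fun w => ∑' n : ℕ, aterm w (n + 1)) atTop U := by
    rw [tendstoLocallyUniformlyOn_iff_forall_isCompact hUopen]
    intro K hKU hK
    rcases K.eq_empty_or_nonempty with rfl | hKne
    · simp [tendstoUniformlyOn_empty]
    obtain ⟨a, haK, ha⟩ := hK.exists_isMinOn hKne Complex.continuous_re.continuousOn
    obtain ⟨b, hbK, hb⟩ := hK.exists_isMaxOn hKne continuous_norm.continuousOn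
    have hδ : 0 < a.re := (hKU haK).1
    apply tendstoUniformlyOn_tsum_nat (summable_bound hδ ‖b‖)
    intro n w hwK
    calc ‖aterm w (n + 1)‖ ≤ ‖w‖ * ((n : ℝ) + 1) ^ (-w.re - 1) :=
          aterm_norm_le' (hKU hwK).1 (hUne1 w (hKU hwK)) n
      _ ≤ ‖b‖ * ((n : ℝ) + 1) ^ (-a.re - 1) := by
          apply mul_le_mul (hb hwK) _ (by positivity) (norm_nonneg b)
          apply Real.rpow_le_rpow_of_exponent_le (by simp)
          have := ha hwK
          simp only [IsMinOn, IsMinFilter] at this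
          have h2 : a.re ≤ w.re := ha hwK
          linarith
  have hdiff : DifferentiableOn ℂ glim U := by
    apply DifferentiableOn.add
    · apply hTLU.differentiableOn (Eventually.of_forall fun N => ?_) hUopen
      apply DifferentiableOn.fun_sum
      intro n _
      exact fun w hw => (aterm_diffAt (hUne1 w hw) n).differentiableWithinAt
    · intro w hw
      apply DifferentiableAt.differentiableWithinAt
      apply DifferentiableAt.div (differentiableAt_const 1)
        (differentiableAt_id.sub (differentiableAt_const 1))
      intro h
      apply hUne1 w hw
      linear_combination h
  have hzdiff : DifferentiableOn ℂ riemannZeta U := fun w hw =>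
    (differentiableAt_riemannZeta (hUne1 w hw)).differentiableWithinAt
  -- base point
  set z₀ : ℂ := 2 + y * Complex.I with hz₀
  have hz₀re : z₀.re = 2 := by simp [hz₀]
  have hz₀im : z₀.im = y := by simp [hz₀]
  set V : Set ℂ := {w | 1 < w.re ∧ 0 < y * w.im} with hV
  have hVopen : IsOpen V := by
    apply IsOpen.inter
    · exact isOpen_lt continuous_const Complex.continuous_re
    · exact isOpen_lt continuous_const (continuous_const.mul Complex.continuous_im)
  have hVU : V ⊆ U := fun w hw => ⟨by linarith [hw.1], hw.2⟩
  have hz₀V : z₀ ∈ V := by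
    constructor
    · rw [hz₀re]; norm_num
    · rw [hz₀im]; exact mul_self_pos.2 hy
  have heq : Set.EqOn glim riemannZeta V := by
    intro w hw
    exact tendsto_nhds_unique (tendsto_sN_glim (by linarith [hw.1] : 0 < w.re)
      (hUne1 w (hVU hw))) (tendsto_sN_zeta hw.1)
  have hzU : z ∈ U := ⟨hx, mul_self_pos.2 hy⟩
  have := (hdiff.analyticOnNhd hUopen).eqOn_of_preconnected_of_eventuallyEq
    (hzdiff.analyticOnNhd hUopen) hUconv.isPreconnected (hVU hz₀V)
    (heq.eventuallyEq_of_mem (hVopen.mem_nhds hz₀V))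
  exact this hzU

lemma partA (z : ℂ) (hx : 0 < z.re) (hy : z.im ≠ 0) :
    Tendsto (fun N : ℕ => zetaPartial z N + ((N : ℂ) + 1) ^ (1 - z) / (z - 1)) atTop
      (nhds (riemannZeta z)) := by
  have hz1 : z ≠ 1 := by
    intro h; rw [h] at hy; simp at hy
  rw [← glim_eq_zeta z hx hy]
  exact tendsto_sN_glim hx hz1

lemma tendsto_exp_sub_one_div : Tendsto (fun s : ℝ => (Real.exp s - 1) / s)
    (nhdsWithin 0 {0}ᶜ) (nhds 1) := by
  have := hasDerivAt_iff_tendsto_slope.1 (Real.hasDerivAt_exp 0)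
  simpa [slope_fun_def, Real.exp_zero, div_eq_inv_mul] using this

lemma tendsto_sin_div : Tendsto (fun u : ℝ => Real.sin u / u)
    (nhdsWithin 0 {0}ᶜ) (nhds 1) := by
  have := hasDerivAt_iff_tendsto_slope.1 (Real.hasDerivAt_sin 0)
  simpa [slope_fun_def, Real.sin_zero, Real.cos_zero, div_eq_inv_mul] using this

lemma tendsto_quad_exp : Tendsto (fun s : ℝ => (s + 1 - Real.exp s) / s ^ 2)
    (nhdsWithin 0 (Set.Ioi 0)) (nhds (-(1 / 2))) := by
  apply HasDerivAt.lhopital_zero_nhdsGT (f' := fun s => 1 - Real.exp s)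
    (g' := fun s => 2 * s)
  · filter_upwards with s
    have h1 : HasDerivAt (fun s : ℝ => s + 1 - Real.exp s) (1 - Real.exp s) s := by
      exact ((hasDerivAt_id s).add_const 1).sub (Real.hasDerivAt_exp s)
    exact h1
  · filter_upwards with s
    simpa using hasDerivAt_pow 2 s
  · filter_upwards [self_mem_nhdsWithin] with s hs
    have : (0 : ℝ) < s := hs
    positivity
  · have : Tendsto (fun s : ℝ => s + 1 - Real.exp s) (nhds 0) (nhds 0) := by
      have hc : Continuous (fun s : ℝ => s + 1 - Real.exp s) := by continuity
      have := hc.tendsto 0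
      simpa using this
    exact this.mono_left nhdsWithin_le_nhds
  · have : Tendsto (fun s : ℝ => s ^ 2) (nhds 0) (nhds 0) := by
      have := (continuous_pow 2 (M := ℝ)).tendsto 0
      simpa using this
    exact this.mono_left nhdsWithin_le_nhds
  · have h2 : Tendsto (fun s : ℝ => -((Real.exp s - 1) / s) / 2)
        (nhdsWithin 0 (Set.Ioi 0)) (nhds (-(1 / 2))) := by
      have := (tendsto_exp_sub_one_div.mono_left
        (nhdsWithin_mono 0 (fun s (hs : s ∈ Set.Ioi 0) => ne_of_gt hs))).neg.div_const 2
      convert this using 1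
      norm_num
    exact h2.congr fun s => by ring

lemma tendsto_exp_half : Tendsto (fun s : ℝ => Real.exp s / (Real.exp s - 1) - 1 / s)
    (nhdsWithin 0 (Set.Ioi 0)) (nhds (1 / 2)) := by
  have hmono : nhdsWithin (0 : ℝ) (Set.Ioi 0) ≤ nhdsWithin 0 {0}ᶜ :=
    nhdsWithin_mono 0 (fun s hs => ne_of_gt hs)
  have hratio : Tendsto (fun s : ℝ => s / (Real.exp s - 1))
      (nhdsWithin 0 (Set.Ioi 0)) (nhds 1) := by
    have h := (tendsto_exp_sub_one_div.mono_left hmono).inv₀ one_ne_zero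
    rw [inv_one] at h
    refine h.congr fun s => ?_
    rw [inv_div]
  have hmul : Tendsto (fun s : ℝ => 1 + (s + 1 - Real.exp s) / s ^ 2 * (s / (Real.exp s - 1)))
      (nhdsWithin 0 (Set.Ioi 0)) (nhds (1 + -(1 / 2) * 1)) :=
    tendsto_const_nhds.add (tendsto_quad_exp.mul hratio)
  have heq : ∀ᶠ s : ℝ in nhdsWithin 0 (Set.Ioi 0),
      1 + (s + 1 - Real.exp s) / s ^ 2 * (s / (Real.exp s - 1))
        = Real.exp s / (Real.exp s - 1) - 1 / s := by
    filter_upwards [self_mem_nhdsWithin] with s hs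
    have hs0 : (0 : ℝ) < s := hs
    have hexp1 : Real.exp s - 1 ≠ 0 := by
      have : (1 : ℝ) < Real.exp s := by
        rw [← Real.exp_zero]
        exact Real.exp_lt_exp.2 hs0
      linarith
    field_simp
    ring
  have h := hmul.congr' heq
  have h12 : (1 : ℝ) + -(1 / 2) * 1 = 1 / 2 := by norm_num
  rwa [h12] at h
lemma tendsto_sin_quad : Tendsto (fun u : ℝ => (Real.sin u - u * Real.cos u) / u ^ 2)
    (nhdsWithin 0 {0}ᶜ) (nhds 0) := by
  apply HasDerivAt.lhopital_zero_nhdsNE (f' := fun u => u * Real.sin u)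
    (g' := fun u => 2 * u)
  · filter_upwards with u
    have h1 : HasDerivAt (fun u : ℝ => Real.sin u - u * Real.cos u)
        (Real.cos u - (1 * Real.cos u + u * -Real.sin u)) u :=
      (Real.hasDerivAt_sin u).sub ((hasDerivAt_id u).mul (Real.hasDerivAt_cos u))
    convert h1 using 1
    ring
  · filter_upwards with u
    simpa using hasDerivAt_pow 2 u
  · filter_upwards [self_mem_nhdsWithin] with u hu
    have : u ≠ 0 := hu
    positivity
  · have hc : Continuous (fun u : ℝ => Real.sin u - u * Real.cos u) := by continuity
    have h := hc.tendsto 0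
    simp only [Real.sin_zero, Real.cos_zero, mul_one, zero_mul, sub_zero] at h
    exact h.mono_left nhdsWithin_le_nhds
  · have := (continuous_pow 2 (M := ℝ)).tendsto 0
    simp only [ne_eq, OfNat.ofNat_ne_zero, not_false_eq_true, zero_pow] at this
    exact this.mono_left nhdsWithin_le_nhds
  · have heq : ∀ᶠ u : ℝ in nhdsWithin 0 {0}ᶜ,
        Real.sin u / 2 = u * Real.sin u / (2 * u) := by
      filter_upwards [self_mem_nhdsWithin] with u hu
      have hu0 : u ≠ 0 := hu
      field_simp
    have hbase : Tendsto (fun u : ℝ => Real.sin u / 2) (nhdsWithin 0 {0}ᶜ) (nhds 0) := by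
      have := (Real.continuous_sin.tendsto 0).div_const 2
      simp only [Real.sin_zero, zero_div] at this
      exact this.mono_left nhdsWithin_le_nhds
    exact hbase.congr' heq

lemma tendsto_sin_cot : Tendsto (fun u : ℝ => (Real.sin u - u * Real.cos u) / (u * Real.sin u))
    (nhdsWithin 0 {0}ᶜ) (nhds 0) := by
  have husin : Tendsto (fun u : ℝ => u / Real.sin u) (nhdsWithin 0 {0}ᶜ) (nhds 1) := by
    have h := tendsto_sin_div.inv₀ one_ne_zero
    rw [inv_one] at h
    refine h.congr fun u => ?_
    rw [inv_div]
  have hmul := tendsto_sin_quad.mul husin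
  rw [zero_mul] at hmul
  refine hmul.congr' ?_
  filter_upwards [self_mem_nhdsWithin] with u hu
  have hu0 : u ≠ 0 := hu
  rw [div_mul_div_comm,
    show u ^ 2 * Real.sin u = u * (u * Real.sin u) by ring,
    show (Real.sin u - u * Real.cos u) * u = u * (Real.sin u - u * Real.cos u) by ring,
    mul_div_mul_left _ _ hu0]

lemma tendsto_one_div_sub_cot {y : ℝ} (hy : y ≠ 0) :
    Tendsto (fun s : ℝ => 1 / s - y / Real.tan (y * s))
      (nhdsWithin 0 (Set.Ioi 0)) (nhds 0) := by
  have hmap : Tendsto (fun s : ℝ => y * s) (nhdsWithin 0 (Set.Ioi 0))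
      (nhdsWithin 0 {0}ᶜ) := by
    rw [tendsto_nhdsWithin_iff]
    constructor
    · have hc : Continuous (fun s : ℝ => y * s) := by fun_prop
      have h := hc.tendsto 0
      rw [mul_zero] at h
      exact h.mono_left nhdsWithin_le_nhds
    · filter_upwards [self_mem_nhdsWithin] with s hs
      have : (0 : ℝ) < s := hs
      exact mul_ne_zero hy (ne_of_gt this)
  have hcomp := (tendsto_sin_cot.comp hmap).const_mul y
  rw [mul_zero] at hcomp
  have hsmall : ∀ᶠ s : ℝ in nhdsWithin 0 (Set.Ioi 0), |y * s| < Real.pi := by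
    have htend : Tendsto (fun s : ℝ => y * s) (nhdsWithin 0 (Set.Ioi 0)) (nhds 0) :=
      (tendsto_nhdsWithin_iff.1 hmap).1
    have := htend.eventually (eventually_abs_sub_lt 0 Real.pi_pos)
    simpa using this
  refine hcomp.congr' ?_
  filter_upwards [self_mem_nhdsWithin, hsmall] with s hs habs
  have hs0 : (0 : ℝ) < s := hs
  have hu0 : y * s ≠ 0 := mul_ne_zero hy (ne_of_gt hs0)
  have hsin : Real.sin (y * s) ≠ 0 := by
    intro h
    rw [Real.sin_eq_zero_iff_of_lt_of_lt (by linarith [abs_lt.1 habs]) (abs_lt.1 habs).2] at h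
    exact hu0 h
  show y * ((Real.sin (y * s) - y * s * Real.cos (y * s)) / (y * s * Real.sin (y * s)))
      = 1 / s - y / Real.tan (y * s)
  rw [Real.tan_eq_sin_div_cos, div_div_eq_mul_div]
  field_simp

lemma tendsto_G {y : ℝ} (hy : y ≠ 0) :
    Tendsto (fun s : ℝ => Real.exp s / (Real.exp s - 1) - y / Real.tan (y * s))
      (nhdsWithin 0 (Set.Ioi 0)) (nhds (1 / 2)) := by
  have h := tendsto_exp_half.add (tendsto_one_div_sub_cot hy)
  rw [add_zero] at h
  refine h.congr fun s => ?_
  ring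

lemma tendsto_t : Tendsto (fun N : ℕ => Real.log (((N : ℝ) + 2) / ((N : ℝ) + 1))) atTop
    (nhdsWithin 0 (Set.Ioi 0)) := by
  rw [tendsto_nhdsWithin_iff]
  constructor
  · have hr : Tendsto (fun N : ℕ => ((N : ℝ) + 2) / ((N : ℝ) + 1)) atTop (nhds 1) := by
      have he : ∀ N : ℕ, ((N : ℝ) + 2) / ((N : ℝ) + 1) = 1 + 1 / ((N : ℝ) + 1) := by
        intro N
        have : ((N : ℝ) + 1) ≠ 0 := by positivity
        field_simp
        ring
      simp only [he]
      have := tendsto_const_nhds (x := (1 : ℝ)) (f := atTop (α := ℕ))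
      have h2 : Tendsto (fun N : ℕ => 1 / ((N : ℝ) + 1)) atTop (nhds 0) :=
        tendsto_one_div_add_atTop_nhds_zero_nat
      simpa using this.add h2
    have hlog := (Real.continuousAt_log one_ne_zero).tendsto.comp hr
    rw [Real.log_one] at hlog
    exact hlog
  · filter_upwards with N
    apply Real.log_pos
    rw [lt_div_iff₀ (by positivity)]
    linarith
end RadialAux

/-- For every `z = x + i·y` with `x > 0` and `y ≠ 0`, the radial-convergence sequence
`c_N(z)` converges to the analytically continued Riemann zeta function at `z`. -/
theorem radialSeq_tendsto_riemannZeta (z : ℂ) (hx : 0 < z.re) (hy : z.im ≠ 0) :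
    Tendsto (fun N : ℕ => radialSeq z N) atTop (nhds (riemannZeta z)) := by
  have hz1 : z ≠ 1 := fun h => hy (by rw [h]; simp)
  have h1z : (1 : ℂ) - z ≠ 0 := fun h => hz1 (by linear_combination -h)
  have hz1' : z - 1 ≠ 0 := fun h => hz1 (by linear_combination h)
  set t : ℕ → ℝ := fun N => Real.log (((N : ℝ) + 2) / ((N : ℝ) + 1)) with ht
  set e : ℕ → ℝ := fun N =>
    (1 - z.re - z.im / Real.tan (z.im * t N)) + ((N : ℝ) + 1) with he
  -- limit of e
  have het : Tendsto e atTop (nhds (1 / 2 - z.re)) := by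
    have hGt := (RadialAux.tendsto_G hy).comp RadialAux.tendsto_t
    have heq : ∀ N : ℕ, e N = (Real.exp (t N) / (Real.exp (t N) - 1)
        - z.im / Real.tan (z.im * t N)) - z.re := by
      intro N
      have hpos : (0 : ℝ) < ((N : ℝ) + 2) / ((N : ℝ) + 1) := by positivity
      have hexp : Real.exp (t N) = ((N : ℝ) + 2) / ((N : ℝ) + 1) := Real.exp_log hpos
      have h1 : Real.exp (t N) - 1 = 1 / ((N : ℝ) + 1) := by
        rw [hexp]
        field_simp
        norm_num
      have h2 : Real.exp (t N) / (Real.exp (t N) - 1) = (N : ℝ) + 2 := by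
        rw [h1, hexp]
        field_simp
      simp only [he]
      rw [h2]
      ring
    exact Tendsto.congr (fun N => (heq N).symm) (hGt.sub_const z.re)
  -- part B : correction minus main term
  have hcpow : Tendsto (fun N : ℕ => ((N : ℂ) + 1) ^ (-z)) atTop (nhds 0) :=
    RadialAux.tendsto_cpow_zero (by simpa using hx)
  have heC : Tendsto (fun N : ℕ => ((e N : ℝ) : ℂ)) atTop
      (nhds ((1 / 2 - z.re : ℝ) : ℂ)) :=
    (Complex.continuous_ofReal.tendsto _).comp het
  have hB : Tendsto (fun N : ℕ => ((N : ℂ) + 1) ^ (-z) * ((e N : ℝ) : ℂ) / (1 - z)) atTop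
      (nhds 0) := by
    have := (hcpow.mul heC).div_const (1 - z)
    simpa using this
  -- identity
  have hid : ∀ N : ℕ, radialSeq z N
      = (zetaPartial z N + ((N : ℂ) + 1) ^ (1 - z) / (z - 1))
        + ((N : ℂ) + 1) ^ (-z) * ((e N : ℝ) : ℂ) / (1 - z) := by
    intro N
    have hb : ((N : ℂ) + 1) ≠ 0 := by
      intro h
      have := congrArg Complex.re h
      push_cast at this
      simp at this
      linarith [Nat.cast_nonneg (α := ℝ) N]
    have hsplit : ((N : ℂ) + 1) ^ (1 - z) = ((N : ℂ) + 1) * ((N : ℂ) + 1) ^ (-z) := by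
      have : (1 : ℂ) - z = 1 + -z := by ring
      rw [this, Complex.cpow_add _ _ hb, Complex.cpow_one]
    have hcast : ((e N : ℝ) : ℂ)
        = ((1 - z.re - z.im / Real.tan (z.im * t N) : ℝ) : ℂ) + ((N : ℂ) + 1) := by
      rw [he]
      push_cast
      ring
    rw [radialSeq, radialCorrection, hsplit, hcast]
    field_simp
    ring
  simp only [hid]
  have := (RadialAux.partA z hx hy).add hB
  simpa using this
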